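/- A function ξ : ℝ⁴ × ℝ⁴ → ℝ⁴, defining a third-order ODE ü = ξ(u̇, u) (suppressing x-dependence), satisfies the autoparallel reparametrization-compatibility conditions u̇^α − (1/3)(∂ξ^α/∂u̇^β) u^β = κ u^α and ξ^α − (1/3)(∂ξ^α/∂u^β) u^β − (2/3)(∂ξ^α/∂u̇^β) u̇^β = μ u^α with κ = 0, μ = 0, when ξ^α(u̇,u) = 3((u̇·u)/‖u‖²) u̇^α − 3[((u̇·u)²/‖u‖⁴) − (1/2)(‖u̇‖²/‖u‖²)] u^α for all u with ‖u‖² ≠ 0 (taking the spin term and constant A equal to zero). -/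

import Mathlib

noncomputable section

set_option maxHeartbeats 1000000

/-- Minkowski metric signature (+,-,-,-) as a diagonal function. -/
def eta (a : Fin 4) : ℝ := if a = 0 then 1 else -1

/-- Minkowski inner product on ℝ⁴. -/
def mdot (v w : Fin 4 → ℝ) : ℝ := ∑ a, eta a * v a * w a

/-- Levi-Civita symbol ε_{abcd} with ε_{0123} = 1. -/
def lev (a b c d : Fin 4) : ℝ :=
  Matrix.det (Matrix.of ![(Pi.single a 1 : Fin 4 → ℝ), Pi.single b 1, Pi.single c 1, Pi.single d 1])

/-- The right-hand side ξ of the third-order equation (with spin term and A zero). -/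
def xiRHS (du u : Fin 4 → ℝ) : Fin 4 → ℝ := fun α =>
  3 * (mdot du u / mdot u u) * du α
  - 3 * ((mdot du u)^2 / (mdot u u)^2 - (1/2) * (mdot du du / mdot u u)) * u α

/- ### Auxiliary lemmas -/

def mdotCLM (u : Fin 4 → ℝ) : (Fin 4 → ℝ) →L[ℝ] ℝ :=
  ∑ a, (eta a * u a) • (ContinuousLinearMap.proj a : (Fin 4 → ℝ) →L[ℝ] ℝ)

lemma mdotCLM_apply (u v : Fin 4 → ℝ) : mdotCLM u v = mdot v u := by
  simp [mdotCLM, mdot]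
  exact Finset.sum_congr rfl fun a _ => by ring

lemma mdot_comm (v w : Fin 4 → ℝ) : mdot v w = mdot w v :=
  Finset.sum_congr rfl fun a _ => by ring

lemma mdot_single (β : Fin 4) (u : Fin 4 → ℝ) : mdot (Pi.single β 1) u = eta β * u β := by
  fin_cases β <;> simp [mdot, Fin.sum_univ_four, Pi.single_apply]

lemma hasF_left (u x : Fin 4 → ℝ) : HasFDerivAt (fun v => mdot v u) (mdotCLM u) x := by
  have h := (mdotCLM u).hasFDerivAt (x := x)
  have e : (fun v => mdot v u) = ⇑(mdotCLM u) := funext fun v => (mdotCLM_apply u v).symm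
  rw [e]; exact h

lemma hasF_self (x : Fin 4 → ℝ) : HasFDerivAt (fun v => mdot v v) ((2:ℝ) • mdotCLM x) x := by
  have h : ∀ a ∈ Finset.univ, HasFDerivAt (fun v : Fin 4 → ℝ => eta a * v a * v a)
      ((eta a * x a) • (ContinuousLinearMap.proj a) + x a • (eta a • (ContinuousLinearMap.proj a : (Fin 4 → ℝ) →L[ℝ] ℝ))) x := by
    intro a _
    have h1 : HasFDerivAt (fun v : Fin 4 → ℝ => eta a * v a)
        (eta a • (ContinuousLinearMap.proj a : (Fin 4 → ℝ) →L[ℝ] ℝ)) x :=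
      ((ContinuousLinearMap.proj a : (Fin 4 → ℝ) →L[ℝ] ℝ).hasFDerivAt).const_mul (eta a)
    exact h1.mul ((ContinuousLinearMap.proj a : (Fin 4 → ℝ) →L[ℝ] ℝ).hasFDerivAt)
  have hs := HasFDerivAt.sum h
  have e : (fun v : Fin 4 → ℝ => ∑ a, eta a * v a * v a) = fun v => mdot v v := rfl
  rw [show (∑ i : Fin 4, fun v : Fin 4 → ℝ => eta i * v i * v i) = fun v => ∑ a, eta a * v a * v a from
    funext fun v => Finset.sum_apply v _ _, e] at hs
  refine hs.congr_fderiv (Eq.symm ?_)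
  ext w
  simp [mdotCLM, ContinuousLinearMap.sum_apply, Finset.smul_sum, Finset.sum_add_distrib]
  rw [← Finset.sum_add_distrib]
  exact Finset.sum_congr rfl fun a _ => by ring

lemma hasF_right (du x : Fin 4 → ℝ) : HasFDerivAt (fun y => mdot du y) (mdotCLM du) x := by
  have e : (fun y => mdot du y) = fun y => mdot y du := funext fun y => mdot_comm du y
  rw [e]; exact hasF_left du x

/-- derivative of xiRHS in the first slot -/
lemma hasF_xi_v (du u : Fin 4 → ℝ) (α : Fin 4) :
    HasFDerivAt (fun v => xiRHS v u α)
      ((3 / mdot u u * du α - 6 * mdot du u * u α / (mdot u u)^2) • mdotCLM u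
        + (3 * mdot du u / mdot u u) • (ContinuousLinearMap.proj α)
        + (3 * u α / mdot u u) • mdotCLM du) du := by
  have h1 := hasF_left u du
  have h2 := (ContinuousLinearMap.proj α : (Fin 4 → ℝ) →L[ℝ] ℝ).hasFDerivAt (x := du)
  have h3 := hasF_self du
  have hA := ((h1.mul_const (mdot u u)⁻¹).const_mul (3:ℝ)).mul h2
  have hB := (((h1.mul h1).mul_const ((mdot u u)⁻¹ * (mdot u u)⁻¹)).sub
      ((h3.mul_const (mdot u u)⁻¹).const_mul ((1:ℝ)/2))).const_mul (3:ℝ)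
  have hC := (hA.sub (hB.mul_const (u α)))
  have e : (fun v => xiRHS v u α)
      = fun v => 3 * (mdot v u * (mdot u u)⁻¹) * v α
        - 3 * (mdot v u * mdot v u * ((mdot u u)⁻¹ * (mdot u u)⁻¹)
            - 1/2 * (mdot v v * (mdot u u)⁻¹)) * u α := by
    funext v; simp [xiRHS]; ring
  rw [e]
  refine hC.congr_fderiv ?_
  ext w
  simp [mdotCLM_apply, ContinuousLinearMap.smul_apply, ContinuousLinearMap.add_apply,
    ContinuousLinearMap.sub_apply]
  ring

/-- derivative of xiRHS in the second slot -/
lemma hasF_xi_u (du u : Fin 4 → ℝ) (hQ : mdot u u ≠ 0) (α : Fin 4) :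
    HasFDerivAt (fun y => xiRHS du y α)
      ((3 * du α / mdot u u - 6 * mdot du u * u α / (mdot u u)^2) • mdotCLM du
        + (-6 * mdot du u * du α / (mdot u u)^2 + 12 * (mdot du u)^2 * u α / (mdot u u)^3
            - 3 * mdot du du * u α / (mdot u u)^2) • mdotCLM u
        + (-3 * (mdot du u)^2 / (mdot u u)^2 + 3 * mdot du du / (2 * mdot u u))
            • (ContinuousLinearMap.proj α)) u := by
  have h1 := hasF_right du u
  have h2 := (ContinuousLinearMap.proj α : (Fin 4 → ℝ) →L[ℝ] ℝ).hasFDerivAt (x := u)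
  have h3 := hasF_self u
  have h4 : HasFDerivAt (fun y => (mdot y y)⁻¹)
      ((-(ContinuousLinearMap.mulLeftRight ℝ ℝ (mdot u u)⁻¹ (mdot u u)⁻¹)).comp
        ((2:ℝ) • mdotCLM u)) u := by
    exact HasFDerivAt.comp (x := u) (hasFDerivAt_inv' (𝕜 := ℝ) (x := mdot u u) hQ) h3
  have hA := ((h1.mul h4).const_mul (3:ℝ)).mul_const (du α)
  have hB := ((((h1.mul h1).mul (h4.mul h4)).sub
      ((h4.const_mul (mdot du du)).const_mul ((1:ℝ)/2))).const_mul (3:ℝ)).mul h2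
  have hC := hA.sub hB
  have e : (fun y => xiRHS du y α)
      = fun y => 3 * (mdot du y * (mdot y y)⁻¹) * du α
        - 3 * (mdot du y * mdot du y * ((mdot y y)⁻¹ * (mdot y y)⁻¹)
            - 1/2 * (mdot du du * (mdot y y)⁻¹)) * y α := by
    funext y; simp [xiRHS]; ring
  rw [e]
  refine hC.congr_fderiv ?_
  ext w
  simp [mdotCLM_apply, ContinuousLinearMap.smul_apply, ContinuousLinearMap.add_apply,
    ContinuousLinearMap.sub_apply, ContinuousLinearMap.comp_apply,
    ContinuousLinearMap.mulLeftRight_apply]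
  field_simp
  ring

lemma sum_key (c₁ c₂ c₃ : ℝ) (α : Fin 4) (p q w : Fin 4 → ℝ) :
    ∑ β, (c₁ * (eta β * p β) + c₂ * (Pi.single β 1 : Fin 4 → ℝ) α + c₃ * (eta β * q β)) * w β
      = c₁ * mdot w p + c₂ * w α + c₃ * mdot w q := by
  fin_cases α <;>
    simp [mdot, Fin.sum_univ_four, Pi.single_apply] <;> ring

/-- ξ satisfies the autoparallel reparametrization-compatibility
conditions with κ = 0 and μ = 0. -/
theorem xi_autoparallel_conditions :
    ∀ (du u : Fin 4 → ℝ), mdot u u ≠ 0 →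
      (∀ α : Fin 4,
        du α - (1/3) * ∑ β, fderiv ℝ (fun v => xiRHS v u α) du (Pi.single β 1) * u β
          = (0 : ℝ) * u α) ∧
      (∀ α : Fin 4,
        xiRHS du u α
        - (1/3) * ∑ β, fderiv ℝ (fun y => xiRHS du y α) u (Pi.single β 1) * u β
        - (2/3) * ∑ β, fderiv ℝ (fun v => xiRHS v u α) du (Pi.single β 1) * du β
          = (0 : ℝ) * u α) := by
  intro du u hQ
  set P := mdot du u with hP
  set Q := mdot u u with hQdef
  set R := mdot du du with hR
  have hv : ∀ α β : Fin 4, fderiv ℝ (fun v => xiRHS v u α) du (Pi.single β 1)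
      = (3 / Q * du α - 6 * P * u α / Q^2) * (eta β * u β)
        + (3 * P / Q) * (Pi.single β 1 : Fin 4 → ℝ) α
        + (3 * u α / Q) * (eta β * du β) := by
    intro α β
    rw [(hasF_xi_v du u α).fderiv]
    simp [mdotCLM_apply, mdot_single, ContinuousLinearMap.smul_apply,
      ContinuousLinearMap.add_apply, ContinuousLinearMap.proj_apply, Pi.single_apply]
    rfl
  have hu : ∀ α β : Fin 4, fderiv ℝ (fun y => xiRHS du y α) u (Pi.single β 1)
      = (-6 * P * du α / Q^2 + 12 * P^2 * u α / Q^3 - 3 * R * u α / Q^2) * (eta β * u β)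
        + (-3 * P^2 / Q^2 + 3 * R / (2 * Q)) * (Pi.single β 1 : Fin 4 → ℝ) α
        + (3 * du α / Q - 6 * P * u α / Q^2) * (eta β * du β) := by
    intro α β
    rw [(hasF_xi_u du u hQ α).fderiv]
    simp [mdotCLM_apply, mdot_single, ContinuousLinearMap.smul_apply,
      ContinuousLinearMap.add_apply, ContinuousLinearMap.proj_apply, Pi.single_apply]
    ring
  constructor
  · intro α
    simp only [hv]
    rw [sum_key]
    rw [← hQdef, ← mdot_comm du u, ← hP]
    field_simp
    ring
  · intro α
    simp only [hu, hv]
    rw [sum_key, sum_key]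
    rw [← hQdef, ← mdot_comm du u, ← hP, ← hR]
    simp only [xiRHS, ← hP, ← hQdef, ← hR]
    field_simp
    ring
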